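/- The 3×3 matrix whose entries are the base-10 lunar squares of [[39, 40, 29], [19, 33, 41], [42, 9, 43]] is a base-10 lunar magic square with pairwise distinct entries whose total is 439, and 439 is not a base-10 lunar square (there is no natural number m with m ⊗ m = 439); hence there exists a lunar magic square of lunar squares whose total is not itself a lunar square. -/

import Mathlib

/-- The `d`-th base-`B` digit of `n` (position 0 is the least significant digit). -/
def lunarDigit (B n d : ℕ) : ℕ := n / B ^ d % B

/-- Base-`B` lunar addition: the `d`-th digit of `x ⊕ y` is the maximum of the
`d`-th digits of `x` and `y` (no carries). -/
def lunarAdd (B x y : ℕ) : ℕ :=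
  ∑ d ∈ Finset.range (x + y + 1), max (lunarDigit B x d) (lunarDigit B y d) * B ^ d

/-- Base-`B` lunar multiplication: the `d`-th digit of `x ⊗ y` is the maximum over
`j + k = d` of the minimum of the `j`-th digit of `x` and the `k`-th digit of `y`. -/
def lunarMul (B x y : ℕ) : ℕ :=
  ∑ d ∈ Finset.range (x + y + 1),
    ((Finset.range (d + 1)).sup fun j => min (lunarDigit B x j) (lunarDigit B y (d - j))) * B ^ d

/-- `M` is a 3×3 base-`B` lunar magic square with total `T`: the lunar sums of the
three rows, the three columns, and the two diagonals all equal `T`. -/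
def IsLunarMagic (B : ℕ) (M : Fin 3 → Fin 3 → ℕ) (T : ℕ) : Prop :=
  (∀ i, lunarAdd B (lunarAdd B (M i 0) (M i 1)) (M i 2) = T) ∧
  (∀ j, lunarAdd B (lunarAdd B (M 0 j) (M 1 j)) (M 2 j) = T) ∧
  lunarAdd B (lunarAdd B (M 0 0) (M 1 1)) (M 2 2) = T ∧
  lunarAdd B (lunarAdd B (M 0 2) (M 1 1)) (M 2 0) = T

/-- The nine entries of `M` are pairwise distinct. -/
def DistinctEntries (M : Fin 3 → Fin 3 → ℕ) : Prop :=
  ∀ i j i' j', M i j = M i' j' → i = i' ∧ j = j'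

/-- The base-`B` lunar square of `m`. -/
def lunarSq (B m : ℕ) : ℕ := lunarMul B m m

lemma lunarDigit_zero_of_lt {n d : ℕ} (h : n < 10 ^ d) : lunarDigit 10 n d = 0 := by
  simp [lunarDigit, Nat.div_eq_of_lt h]

lemma lunarMul_trunc {x y : ℕ} (hx1 : 1 ≤ x) (hx : x < 100) (hy1 : 1 ≤ y) (hy : y < 100) :
    lunarMul 10 x y = ∑ d ∈ Finset.range 3,
      ((Finset.range (d + 1)).sup fun j => min (lunarDigit 10 x j) (lunarDigit 10 y (d - j)))
        * 10 ^ d := by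
  unfold lunarMul
  refine (Finset.sum_subset ?_ ?_).symm
  · intro d hd
    simp only [Finset.mem_range] at *
    omega
  · intro d _ hd
    simp only [Finset.mem_range, not_lt] at hd
    have : ((Finset.range (d + 1)).sup fun j =>
        min (lunarDigit 10 x j) (lunarDigit 10 y (d - j))) = 0 := by
      apply Nat.le_zero.mp
      apply Finset.sup_le
      intro j hj
      rcases le_or_gt 2 j with h2 | h2
      · have : lunarDigit 10 x j = 0 := by
          apply lunarDigit_zero_of_lt
          calc x < 100 := hx
          _ = 10 ^ 2 := by norm_num
          _ ≤ 10 ^ j := Nat.pow_le_pow_right (by norm_num) h2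
        simp [this]
      · have : lunarDigit 10 y (d - j) = 0 := by
          apply lunarDigit_zero_of_lt
          calc y < 100 := hy
          _ = 10 ^ 2 := by norm_num
          _ ≤ 10 ^ (d - j) := Nat.pow_le_pow_right (by norm_num) (by omega)
        simp [this]
    simp [this]

set_option maxRecDepth 10000 in
set_option maxHeartbeats 1000000 in
lemma key : ∀ m < 100, (∑ d ∈ Finset.range 3,
      ((Finset.range (d + 1)).sup fun j => min (lunarDigit 10 m j) (lunarDigit 10 m (d - j)))
        * 10 ^ d) ≠ 439 := by decide

lemma big {m : ℕ} (hm : 100 ≤ m) : 439 < lunarSq 10 m := by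
  set p := Nat.log 10 m with hp
  have hm0 : m ≠ 0 := by omega
  have h1 : 10 ^ p ≤ m := Nat.pow_log_le_self 10 hm0
  have h2 : m < 10 ^ (p + 1) := Nat.lt_pow_succ_log_self (by norm_num) m
  have hp2 : 2 ≤ p := by
    rw [hp]
    exact (Nat.le_log_iff_pow_le (by norm_num) hm0).mpr (by simpa using hm)
  have hdig : lunarDigit 10 m p = m / 10 ^ p := by
    have : m / 10 ^ p < 10 := by
      rw [Nat.div_lt_iff_lt_mul (by positivity)]
      calc m < 10 ^ (p + 1) := h2
      _ = 10 ^ p * 10 := by ring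
      _ ≤ 10 * 10 ^ p := by ring_nf; omega
    simpa [lunarDigit] using Nat.mod_eq_of_lt this
  have hdig1 : 1 ≤ lunarDigit 10 m p := by
    rw [hdig]
    exact (Nat.one_le_div_iff (by positivity)).mpr h1
  have hpm : p ≤ m := le_trans (le_of_lt (Nat.lt_pow_self (a := 10) (n := p) (by norm_num))) h1
  have hmem : 2 * p ∈ Finset.range (m + m + 1) := by
    simp only [Finset.mem_range]; omega
  have hterm : 10 ^ (2 * p) ≤
      ((Finset.range (2 * p + 1)).sup fun j =>
        min (lunarDigit 10 m j) (lunarDigit 10 m (2 * p - j))) * 10 ^ (2 * p) := by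
    have : 1 ≤ (Finset.range (2 * p + 1)).sup fun j =>
        min (lunarDigit 10 m j) (lunarDigit 10 m (2 * p - j)) := by
      refine le_trans ?_ (Finset.le_sup (f := fun j =>
        min (lunarDigit 10 m j) (lunarDigit 10 m (2 * p - j)))
        (Finset.mem_range.mpr (by omega : p < 2 * p + 1)))
      show 1 ≤ min (lunarDigit 10 m p) (lunarDigit 10 m (2 * p - p))
      have h3 : 2 * p - p = p := by omega
      rw [h3]
      simp [hdig1]
    nlinarith [pow_pos (show 0 < 10 by norm_num) (2*p)]
  calc (439 : ℕ) < 10 ^ 4 := by norm_num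
  _ ≤ 10 ^ (2 * p) := Nat.pow_le_pow_right (by norm_num) (by omega)
  _ ≤ _ := hterm
  _ ≤ lunarSq 10 m := Finset.single_le_sum (f := fun d =>
      ((Finset.range (d + 1)).sup fun j =>
        min (lunarDigit 10 m j) (lunarDigit 10 m (d - j))) * 10 ^ d)
      (fun i _ => Nat.zero_le _) hmem

lemma no_sq : ¬ ∃ m : ℕ, lunarSq 10 m = 439 := by
  rintro ⟨m, h⟩
  rcases lt_or_ge m 100 with hm | hm
  · rcases Nat.eq_zero_or_pos m with rfl | hm1
    · revert h; decide
    · rw [lunarSq, lunarMul_trunc hm1 hm hm1 hm] at h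
      exact key m hm h
  · exact absurd h (Nat.ne_of_gt (big hm))

set_option maxRecDepth 100000 in
set_option maxHeartbeats 2000000 in
lemma hM : (fun i j => lunarSq 10 (![![39, 40, 29], ![19, 33, 41], ![42, 9, 43]] i j)) =
    (fun i j => (![![339, 400, 229], ![119, 333, 411], ![422, 9, 433]] : Fin 3 → Fin 3 → ℕ) i j) := by
  funext i j
  fin_cases i <;> fin_cases j <;> decide

set_option maxRecDepth 100000 in
set_option maxHeartbeats 4000000 in
theorem stmt_16 :
    IsLunarMagic 10
      (fun i j => lunarSq 10 (![![39, 40, 29], ![19, 33, 41], ![42, 9, 43]] i j)) 439 ∧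
    DistinctEntries
      (fun i j => lunarSq 10 (![![39, 40, 29], ![19, 33, 41], ![42, 9, 43]] i j)) ∧
    ¬ ∃ m : ℕ, lunarSq 10 m = 439 := by
  refine ⟨?_, ?_, no_sq⟩
  · rw [show (fun i j => lunarSq 10 (![![39, 40, 29], ![19, 33, 41], ![42, 9, 43]] i j)) = _ from hM]
    unfold IsLunarMagic
    refine ⟨by decide, by decide, by decide, by decide⟩
  · rw [show (fun i j => lunarSq 10 (![![39, 40, 29], ![19, 33, 41], ![42, 9, 43]] i j)) = _ from hM]
    unfold DistinctEntries
    decide
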